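/- (Charnes–Cooper transformation) Let A be an m×n real matrix, β ∈ ℝ^m, γ ∈ ℝ^n, α ∈ ℝ^n, a, b ∈ ℝ. Consider F = { x ∈ ℝ^n : A x ≤ β, αᵀx + b > 0, x ≥ 0 } and G = { (y,t) ∈ ℝ^n × ℝ : A y − β t ≤ 0, αᵀy + b t = 1, y ≥ 0, t > 0 }. Then sup over F of (γᵀx + a)/(αᵀx + b) equals sup over G of (γᵀy + a t), where the map x ↦ (x/(αᵀx+b), 1/(αᵀx+b)) is a bijection from F onto G with inverse (y,t) ↦ y/t. -/

import Mathlib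

open Matrix

/-- The Charnes–Cooper transformation: the linear fractional program
`sup { (γᵀx + a)/(αᵀx + b) : Ax ≤ β, αᵀx + b > 0, x ≥ 0 }` is equivalent to the
linear program `sup { γᵀy + a·t : Ay - βt ≤ 0, αᵀy + bt = 1, y ≥ 0, t > 0 }`,
via the bijection `x ↦ (x/(αᵀx+b), 1/(αᵀx+b))` with inverse `(y,t) ↦ y/t`. -/
theorem stmt13 {m n : ℕ} (A : Matrix (Fin m) (Fin n) ℝ) (β : Fin m → ℝ)
    (γ α : Fin n → ℝ) (a b : ℝ) :
    let F : Set (Fin n → ℝ) :=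
      {x | A.mulVec x ≤ β ∧ 0 < α ⬝ᵥ x + b ∧ 0 ≤ x}
    let G : Set ((Fin n → ℝ) × ℝ) :=
      {p | A.mulVec p.1 ≤ p.2 • β ∧ α ⬝ᵥ p.1 + b * p.2 = 1 ∧ 0 ≤ p.1 ∧ 0 < p.2}
    let φ : (Fin n → ℝ) → (Fin n → ℝ) × ℝ :=
      fun x => ((α ⬝ᵥ x + b)⁻¹ • x, (α ⬝ᵥ x + b)⁻¹)
    sSup ((fun x => (((γ ⬝ᵥ x + a) / (α ⬝ᵥ x + b) : ℝ) : EReal)) '' F)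
        = sSup ((fun p => ((γ ⬝ᵥ p.1 + a * p.2 : ℝ) : EReal)) '' G) ∧
      Set.BijOn φ F G ∧
      Set.InvOn (fun p : (Fin n → ℝ) × ℝ => p.2⁻¹ • p.1) φ F G := by
  intro F G φ
  -- forward maps into G
  have hmaps : Set.MapsTo φ F G := by
    rintro x ⟨hA, hs, hx⟩
    have hs0 : α ⬝ᵥ x + b ≠ 0 := ne_of_gt hs
    have hsinv : 0 < (α ⬝ᵥ x + b)⁻¹ := inv_pos.mpr hs
    refine ⟨?_, ?_, ?_, hsinv⟩
    · show A.mulVec ((α ⬝ᵥ x + b)⁻¹ • x) ≤ (α ⬝ᵥ x + b)⁻¹ • β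
      rw [A.mulVec_smul]
      exact smul_le_smul_of_nonneg_left hA hsinv.le
    · show α ⬝ᵥ ((α ⬝ᵥ x + b)⁻¹ • x) + b * (α ⬝ᵥ x + b)⁻¹ = 1
      rw [dotProduct_smul, smul_eq_mul]
      field_simp
    · exact smul_nonneg hsinv.le hx
  have hback : Set.MapsTo (fun p : (Fin n → ℝ) × ℝ => p.2⁻¹ • p.1) G F := by
    rintro ⟨y, t⟩ ⟨hA, h1, hy, ht⟩
    have ht0 : t ≠ 0 := ne_of_gt ht
    have hsum : α ⬝ᵥ (t⁻¹ • y) + b = t⁻¹ := by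
      rw [dotProduct_smul, smul_eq_mul]
      field_simp
      linarith [h1]
    refine ⟨?_, ?_, smul_nonneg (inv_pos.mpr ht).le hy⟩
    · show A.mulVec (t⁻¹ • y) ≤ β
      rw [A.mulVec_smul]
      calc t⁻¹ • A.mulVec y ≤ t⁻¹ • (t • β) := smul_le_smul_of_nonneg_left hA (inv_pos.mpr ht).le
        _ = β := by rw [smul_smul, inv_mul_cancel₀ ht0, one_smul]
    · show 0 < α ⬝ᵥ (t⁻¹ • y) + b
      rw [hsum]; exact inv_pos.mpr ht
  have hleft : Set.LeftInvOn (fun p : (Fin n → ℝ) × ℝ => p.2⁻¹ • p.1) φ F := by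
    rintro x ⟨_, hs, _⟩
    show ((α ⬝ᵥ x + b)⁻¹)⁻¹ • ((α ⬝ᵥ x + b)⁻¹ • x) = x
    rw [smul_smul, inv_inv, mul_inv_cancel₀ (ne_of_gt hs), one_smul]
  have hright : Set.RightInvOn (fun p : (Fin n → ℝ) × ℝ => p.2⁻¹ • p.1) φ G := by
    rintro ⟨y, t⟩ ⟨hA, h1, hy, ht⟩
    have ht0 : t ≠ 0 := ne_of_gt ht
    have hsum : α ⬝ᵥ (t⁻¹ • y) + b = t⁻¹ := by
      rw [dotProduct_smul, smul_eq_mul]; field_simp; linarith [h1]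
    show ((α ⬝ᵥ (t⁻¹ • y) + b)⁻¹ • (t⁻¹ • y), (α ⬝ᵥ (t⁻¹ • y) + b)⁻¹) = (y, t)
    rw [hsum, inv_inv]
    exact Prod.ext (by rw [smul_smul, mul_inv_cancel₀ ht0, one_smul]) rfl
  have hinv : Set.InvOn (fun p : (Fin n → ℝ) × ℝ => p.2⁻¹ • p.1) φ F G := ⟨hleft, hright⟩
  have hbij : Set.BijOn φ F G := by
    refine ⟨hmaps, ?_, ?_⟩
    · exact hleft.injOn
    · intro p hp
      exact ⟨_, hback hp, hright hp⟩
  refine ⟨?_, hbij, hinv⟩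
  have himg : φ '' F = G := hbij.image_eq
  rw [← himg, ← Set.image_comp]
  apply congrArg
  apply Set.image_congr
  intro x hx
  obtain ⟨_, hs, _⟩ := hx
  have hs0 : α ⬝ᵥ x + b ≠ 0 := ne_of_gt hs
  show (((γ ⬝ᵥ x + a) / (α ⬝ᵥ x + b) : ℝ) : EReal)
      = ((γ ⬝ᵥ ((α ⬝ᵥ x + b)⁻¹ • x) + a * (α ⬝ᵥ x + b)⁻¹ : ℝ) : EReal)
  congr 1
  rw [dotProduct_smul, smul_eq_mul]
  field_simp
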